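/- Let T be a Hurwitz tree of type (G,p) with set of leaves B, let A ⊆ B, b ∈ A, and let χ be a character of G with ⟨χ, (u_{G_a})^*⟩ = m for a ∈ A and = 0 for a ∈ B∖A, where m = ⟨χ, u_G⟩. Then m · d(A, b) = δ_b(χ) - δ_{v_0}(χ), where d(A,b) is the density of A at b and δ_{v_0} is the depth at the root. -/

import Mathlib

open Finset

/-- A rooted metric tree: a finite set of vertices with a parent function, a root, a
unique trunk edge at the root, and a nonnegative rational thickness attached to each
edge (recorded at its target vertex), which vanishes exactly at the leaves. -/
structure MetricRootedTree where
  V : Type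
  [fin : Fintype V]
  [deq : DecidableEq V]
  root : V
  parent : V → V
  parent_root : parent root = root
  reaches_root : ∀ v, ∃ n : ℕ, parent^[n] v = root
  trunk : V
  trunk_ne : trunk ≠ root
  trunk_parent : parent trunk = root
  trunk_unique : ∀ w, w ≠ root → parent w = root → w = trunk
  eps : V → ℚ
  eps_nonneg : ∀ v, 0 ≤ eps v
  eps_zero_iff : ∀ v, v ≠ root → (eps v = 0 ↔ ∀ w, parent w = v → w = v)

attribute [instance] MetricRootedTree.fin MetricRootedTree.deq

namespace MetricRootedTree

variable (T : MetricRootedTree)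

/-- `v ≤ w` : there is an oriented path from `v` down to `w`. -/
def le (v w : T.V) : Prop := ∃ n : ℕ, T.parent^[n] w = v

/-- A leaf is a maximal vertex (no children) other than the root. -/
def IsLeaf (v : T.V) : Prop := v ≠ T.root ∧ ∀ w, T.parent w = v → w = v

open Classical in
/-- The set `B` of leaves. -/
noncomputable def leaves : Finset T.V := Finset.univ.filter T.IsLeaf

open Classical in
/-- Inverse distance between two leaves: the sum of the thicknesses of the edges on the
common initial segment of the paths from the root to `b₁` and to `b₂`. -/
noncomputable def idist (b₁ b₂ : T.V) : ℚ :=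
  ∑ v ∈ Finset.univ.filter (fun v => T.le v b₁ ∧ T.le v b₂ ∧ v ≠ T.root), T.eps v

/-- The density of a set of leaves `A` at `b ∈ A`: `d(A,b) = Σ_{b' ∈ A, b' ≠ b} d(b,b')`. -/
noncomputable def density (A : Finset T.V) (b : T.V) : ℚ :=
  ∑ b' ∈ A.erase b, T.idist b b'

open Classical in
/-- `n(A,v) = |{b' ∈ A : b' ≠ b, v ≤ b'}|`. -/
noncomputable def nCount (A : Finset T.V) (b v : T.V) : ℕ :=
  ((A.erase b).filter (fun b' => T.le v b')).card

end MetricRootedTree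

section Characters

open Classical

variable {G : Type} [Group G] [Fintype G]

/-- Inner product of class functions on a finite group. -/
noncomputable def innerCF (χ₁ χ₂ : G → ℂ) : ℂ :=
  (Fintype.card G : ℂ)⁻¹ * ∑ g : G, (starRingEnd ℂ) (χ₁ g) * χ₂ g

/-- Induction of a class function supported on a subgroup `H ≤ G` to `G`. -/
noncomputable def indCF (H : Subgroup G) (f : G → ℂ) : G → ℂ :=
  fun g => (Nat.card H : ℂ)⁻¹ * ∑ x : G, f (x⁻¹ * g * x)

open Classical in
/-- The augmentation character `u_H = r_H - 1_H` of `H`, extended by zero to `G`. -/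
noncomputable def augChar (H : Subgroup G) : G → ℂ :=
  fun h => if h ∈ H then (if h = 1 then (Nat.card H : ℂ) - 1 else -1) else 0

/-- The induced augmentation character `(u_H)^* = Ind_H^G (r_H - 1_H)`. -/
noncomputable def indAug (H : Subgroup G) : G → ℂ := indCF H (augChar H)

open Classical in
/-- The class function `δ_H^mult` of a cyclic `p`-subgroup `H ≤ G` of order `p^m`
(extended by zero to `G`): `δ(σ^a) = -p^(i+1)/(p-1)` for `σ^a ≠ 1` with `i = ord_p a`
(so that `σ^a` has order `p^(m-i)`), and `δ(1) = m·p^m`. -/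
noncomputable def deltaMultSub (p : ℕ) (H : Subgroup G) : G → ℂ :=
  fun h =>
    if h ∈ H then
      (if h = 1 then ((Nat.card H).factorization p : ℂ) * (Nat.card H : ℂ)
       else -((p : ℂ) ^ ((Nat.card H).factorization p - (orderOf h).factorization p + 1))
              / ((p : ℂ) - 1))
    else 0

end Characters

open Classical in
/-- The set of children (successors) of a vertex. -/
noncomputable def MetricRootedTree.children (T : MetricRootedTree) (v : T.V) : Finset T.V :=
  Finset.univ.filter (fun w => T.parent w = v ∧ w ≠ v)

/-- A Hurwitz tree of type `(G,p)`: a rooted metric tree with monodromy groups `G_v`,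
Artin characters `a_e` (attached to the target vertex of each edge) and depth characters
`δ_v`, subject to axioms (H1)–(H5) of Brewis–Wewers. -/
structure HurwitzTree (G : Type) [Group G] [Fintype G] (p : ℕ) extends MetricRootedTree where
  Gv : V → Subgroup G
  av : V → G → ℂ
  dv : V → G → ℂ
  -- (H1): monodromy groups decrease (up to conjugacy) along edges …
  h1_sub : ∀ v w, parent w = v → w ≠ v → ∃ g : G, ∀ x ∈ Gv w, g * x * g⁻¹ ∈ Gv v
  -- … with branching `Σ_{v → v'} [G_v : G_{v'}] > 1` at interior non-root vertices …
  h1_branch : ∀ v, v ≠ root → ¬ toMetricRootedTree.IsLeaf v →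
    1 < ∑ w ∈ toMetricRootedTree.children v, Nat.card (Gv v) / Nat.card (Gv w)
  -- … and monodromy group `G` at the root and at the target of the trunk.
  h1_root : Gv root = ⊤
  h1_trunk : Gv trunk = ⊤
  -- (H2): the monodromy group at each leaf is nontrivial and cyclic.
  h2 : ∀ b, toMetricRootedTree.IsLeaf b → Gv b ≠ ⊥ ∧ IsCyclic (Gv b)
  -- (H3): the Artin characters.
  h3_leaf : ∀ b, toMetricRootedTree.IsLeaf b → av b = indAug (Gv b)
  h3_inner : ∀ v, v ≠ root → ¬ toMetricRootedTree.IsLeaf v →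
    av v = fun g => ∑ w ∈ toMetricRootedTree.children v, av w g
  -- (H4): the depth characters, `δ_{t(e)} = δ_{s(e)} + ε_e·(a_e - (u_{G_{t(e)}})^*)`.
  h4 : ∀ v, v ≠ root →
    dv v = fun g => dv (parent v) g + (eps v : ℂ) * (av v g - indAug (Gv v) g)
  -- (H5): at each leaf, `δ_b` is induced from `δ^mult` of the Sylow `p`-subgroup of `G_b`.
  h5 : ∀ b, toMetricRootedTree.IsLeaf b → ∀ P : Subgroup G, P ≤ Gv b → IsPGroup p P →
    (∀ Q : Subgroup G, Q ≤ Gv b → IsPGroup p Q → Q ≤ P) →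
    dv b = indCF P (deltaMultSub p P)

namespace HurwitzTree

variable {G : Type} [Group G] [Fintype G] {p : ℕ} (T : HurwitzTree G p)

/-- The depth `δ_T` of a Hurwitz tree. -/
noncomputable def depth : G → ℂ := T.dv T.root

/-- The Artin character `a_T` of a Hurwitz tree (the Artin character of the trunk). -/
noncomputable def artin : G → ℂ := T.av T.trunk

end HurwitzTree
section MyCharLemmas

open Module Finset

variable {G : Type} [Group G] [Fintype G]

noncomputable def Fdim (V : FDRep ℂ G) (H : Subgroup G) : ℕ :=
  finrank ℂ (Representation.invariants (V.ρ.comp H.subtype))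

open Classical in
theorem sum_char_subgroup (V : FDRep ℂ G) (H : Subgroup G) :
    ∑ g : G, (if g ∈ H then V.character g else 0) = (Nat.card H : ℂ) * Fdim V H := by
  classical
  have hc : (Fintype.card H : ℂ) ≠ 0 := Nat.cast_ne_zero.mpr Fintype.card_ne_zero
  haveI : Invertible (Fintype.card H : ℂ) := invertibleOfNonzero hc
  have key := FDRep.average_char_eq_finrank_invariants (FDRep.of (V.ρ.comp H.subtype))
  have hch : ∀ h : H, (FDRep.of (V.ρ.comp H.subtype)).character h = V.character (h : G) := by
    intro h; rfl
  rw [Finset.sum_congr rfl (fun h _ => hch h)] at key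
  have h2 : (finrank ℂ (Representation.invariants (FDRep.of (V.ρ.comp H.subtype)).ρ)) = Fdim V H := rfl
  have h1 : ∑ g : G, (if g ∈ H then V.character g else 0)
      = ∑ h : H, V.character (h : G) := by
    rw [← Finset.sum_filter]
    exact Finset.sum_subtype (Finset.univ.filter (· ∈ H)) (by intro x; simp) (fun g => V.character g)
  rw [h1, ← smul_eq_mul, Nat.card_eq_fintype_card, ← h2, ← key, smul_eq_mul, ← mul_assoc, Nat.card_eq_fintype_card, mul_inv_cancel₀ hc, one_mul]

theorem Fdim_mono (V : FDRep ℂ G) {H K : Subgroup G} (h : H ≤ K) : Fdim V K ≤ Fdim V H := by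
  apply Submodule.finrank_mono
  intro v hv
  rw [Representation.mem_invariants] at hv ⊢
  intro g
  exact hv ⟨g.1, h g.2⟩

/-- If `g H g⁻¹ ⊆ K` then `Fdim K ≤ Fdim H`. -/
theorem Fdim_conj_le (V : FDRep ℂ G) {H K : Subgroup G} (g : G)
    (h : ∀ x ∈ H, g * x * g⁻¹ ∈ K) : Fdim V K ≤ Fdim V H := by
  let e : V ≃ₗ[ℂ] V := LinearEquiv.ofLinear (V.ρ g⁻¹) (V.ρ g)
    (by rw [← Module.End.mul_eq_comp, ← map_mul V.ρ, inv_mul_cancel, map_one]; rfl)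
    (by rw [← Module.End.mul_eq_comp, ← map_mul V.ρ, mul_inv_cancel, map_one]; rfl)
  have hmap : (Representation.invariants (V.ρ.comp K.subtype)).map (e : V →ₗ[ℂ] V)
      ≤ Representation.invariants (V.ρ.comp H.subtype) := by
    rintro _ ⟨v, hv, rfl⟩
    rw [SetLike.mem_coe, Representation.mem_invariants] at hv
    rw [Representation.mem_invariants]
    intro x
    have h1 : (V.ρ.comp H.subtype) x ((e : V →ₗ[ℂ] V) v) = V.ρ (x : G) (V.ρ g⁻¹ v) := rfl
    have h2 : V.ρ (x : G) (V.ρ g⁻¹ v) = V.ρ g⁻¹ (V.ρ (g * x * g⁻¹) v) := by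
      rw [← Module.End.mul_apply, ← map_mul, ← Module.End.mul_apply, ← map_mul]
      congr 1; group
    have h3 : V.ρ (g * (x : G) * g⁻¹) v = v := hv ⟨_, h x.1 x.2⟩
    rw [h1, h2, h3]; rfl
  calc Fdim V K = finrank ℂ ((Representation.invariants (V.ρ.comp K.subtype)).map
        (e : V →ₗ[ℂ] V)) := (LinearEquiv.finrank_map_eq e _).symm
    _ ≤ Fdim V H := Submodule.finrank_mono hmap

/-- Frobenius reciprocity form: inner product against an induced class function. -/
theorem innerCF_indCF (χ : G → ℂ) (hclass : ∀ x g : G, χ (x * g * x⁻¹) = χ g)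
    (H : Subgroup G) (f : G → ℂ) :
    innerCF χ (indCF H f) =
      (Nat.card H : ℂ)⁻¹ * ∑ g : G, (starRingEnd ℂ) (χ g) * f g := by
  have hG : (Fintype.card G : ℂ) ≠ 0 := Nat.cast_ne_zero.mpr Fintype.card_ne_zero
  have step1 : ∀ x : G, ∑ g : G, (starRingEnd ℂ) (χ g) * f (x⁻¹ * g * x)
      = ∑ g : G, (starRingEnd ℂ) (χ g) * f g := by
    intro x
    apply Fintype.sum_equiv (MulAut.conj x⁻¹).toEquiv
    intro h
    simp only [MulAut.conj_apply, MulEquiv.toEquiv_eq_coe, MulEquiv.coe_toEquiv]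
    rw [hclass, inv_inv]
  have expand : ∑ g : G, (starRingEnd ℂ) (χ g) *
        ((Nat.card H : ℂ)⁻¹ * ∑ x : G, f (x⁻¹ * g * x))
      = (Nat.card H : ℂ)⁻¹ *
        ((Fintype.card G : ℂ) * ∑ g : G, (starRingEnd ℂ) (χ g) * f g) := by
    calc ∑ g : G, (starRingEnd ℂ) (χ g) * ((Nat.card H : ℂ)⁻¹ * ∑ x : G, f (x⁻¹ * g * x))
        = ∑ g : G, (Nat.card H : ℂ)⁻¹ * ∑ x : G, (starRingEnd ℂ) (χ g) * f (x⁻¹ * g * x) := by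
          apply Finset.sum_congr rfl
          intro g _
          simp only [Finset.mul_sum]
          apply Finset.sum_congr rfl
          intro x _
          ring
      _ = (Nat.card H : ℂ)⁻¹ * ∑ g : G, ∑ x : G, (starRingEnd ℂ) (χ g) * f (x⁻¹ * g * x) := by
          rw [Finset.mul_sum]
      _ = (Nat.card H : ℂ)⁻¹ * ∑ x : G, ∑ g : G, (starRingEnd ℂ) (χ g) * f (x⁻¹ * g * x) := by
          rw [Finset.sum_comm]
      _ = (Nat.card H : ℂ)⁻¹ * ∑ _x : G, ∑ g : G, (starRingEnd ℂ) (χ g) * f g := by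
          rw [Finset.sum_congr rfl fun x _ => step1 x]
      _ = (Nat.card H : ℂ)⁻¹ *
            ((Fintype.card G : ℂ) * ∑ g : G, (starRingEnd ℂ) (χ g) * f g) := by
          rw [Finset.sum_const, Finset.card_univ, nsmul_eq_mul]
  show (Fintype.card G : ℂ)⁻¹ * ∑ g : G, (starRingEnd ℂ) (χ g) * indCF H f g
      = (Nat.card H : ℂ)⁻¹ * ∑ g : G, (starRingEnd ℂ) (χ g) * f g
  unfold indCF
  rw [expand]
  rw [show (Fintype.card G : ℂ)⁻¹ * ((Nat.card H : ℂ)⁻¹ *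
      ((Fintype.card G : ℂ) * ∑ g : G, (starRingEnd ℂ) (χ g) * f g))
    = ((Fintype.card G : ℂ)⁻¹ * (Fintype.card G : ℂ)) *
      ((Nat.card H : ℂ)⁻¹ * ∑ g : G, (starRingEnd ℂ) (χ g) * f g) from by ring]
  rw [inv_mul_cancel₀ hG, one_mul]

open Classical in
theorem innerCF_indAug_eq (V : FDRep ℂ G) (χ : G → ℂ) (hχ : ∀ g, χ g = V.character g)
    (H : Subgroup G) :
    innerCF χ (indAug H) = (starRingEnd ℂ) (χ 1) - (Fdim V H : ℂ) := by
  classical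
  have hclass : ∀ x g : G, χ (x * g * x⁻¹) = χ g := by
    intro x g; rw [hχ, hχ, FDRep.char_conj]
  have hH : (Nat.card H : ℂ) ≠ 0 := by
    exact_mod_cast Nat.cast_ne_zero.mpr (Nat.card_pos (α := H)).ne'
  rw [indAug, innerCF_indCF χ hclass]
  have hpt : ∀ g : G, (starRingEnd ℂ) (χ g) * augChar H g
      = (if g = 1 then (starRingEnd ℂ) (χ 1) * (Nat.card H : ℂ) else 0)
        - (if g ∈ H then (starRingEnd ℂ) (χ g) else 0) := by
    intro g
    unfold augChar
    by_cases h1 : g = 1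
    · subst h1
      simp [Subgroup.one_mem]
      ring
    · by_cases h2 : g ∈ H <;> simp [h1, h2]
  rw [Finset.sum_congr rfl fun g _ => hpt g, Finset.sum_sub_distrib]
  rw [Finset.sum_ite_eq' Finset.univ (1 : G)
    (fun _ => (starRingEnd ℂ) (χ 1) * (Nat.card H : ℂ))]
  have hconj : ∑ g : G, (if g ∈ H then (starRingEnd ℂ) (χ g) else 0)
      = (Nat.card H : ℂ) * (Fdim V H : ℂ) := by
    have : ∀ g : G, (if g ∈ H then (starRingEnd ℂ) (χ g) else 0)
        = (starRingEnd ℂ) (if g ∈ H then V.character g else 0) := by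
      intro g
      rw [apply_ite (starRingEnd ℂ), map_zero, hχ]
    rw [Finset.sum_congr rfl fun g _ => this g, ← map_sum, sum_char_subgroup V H]
    rw [map_mul, map_natCast, map_natCast]
  rw [hconj, if_pos (Finset.mem_univ (1:G))]
  field_simp

open Classical in
theorem indAug_top_eq : indAug (⊤ : Subgroup G) = augChar (⊤ : Subgroup G) := by
  classical
  funext g
  have hG : (Fintype.card G : ℂ) ≠ 0 := Nat.cast_ne_zero.mpr Fintype.card_ne_zero
  have hstep : ∀ x : G, augChar (⊤ : Subgroup G) (x⁻¹ * g * x) = augChar (⊤ : Subgroup G) g := by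
    intro x
    have hiff : x⁻¹ * g * x = 1 ↔ g = 1 := by
      constructor
      · intro h
        have : g = x * 1 * x⁻¹ := by rw [← h]; group
        simpa using this
      · rintro rfl; group
    unfold augChar
    simp only [Subgroup.mem_top, if_true]
    by_cases h : g = 1
    · rw [if_pos (hiff.mpr h), if_pos h]
    · rw [if_neg (fun hc => h (hiff.mp hc)), if_neg h]
  show (Nat.card (⊤ : Subgroup G) : ℂ)⁻¹ * ∑ x : G, augChar (⊤ : Subgroup G) (x⁻¹ * g * x) = _
  rw [Finset.sum_congr rfl fun x _ => hstep x, Finset.sum_const, Finset.card_univ, nsmul_eq_mul]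
  have hcard : (Nat.card (⊤ : Subgroup G) : ℂ) = (Fintype.card G : ℂ) := by
    rw [Subgroup.card_top, Nat.card_eq_fintype_card]
  rw [hcard, ← mul_assoc, inv_mul_cancel₀ hG, one_mul]


end MyCharLemmas
section MyTreeLemmas

open Finset

variable (T : MetricRootedTree)

theorem MRT.le_refl (v : T.V) : T.le v v := ⟨0, rfl⟩

theorem MRT.le_trans {u v w : T.V} (h1 : T.le u v) (h2 : T.le v w) : T.le u w := by
  obtain ⟨n, hn⟩ := h1
  obtain ⟨m, hm⟩ := h2
  exact ⟨n + m, by rw [Function.iterate_add_apply, hm, hn]⟩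

theorem MRT.root_fixed (n : ℕ) : T.parent^[n] T.root = T.root :=
  Function.iterate_fixed T.parent_root n

theorem MRT.le_root {v : T.V} (h : T.le v T.root) : v = T.root := by
  obtain ⟨n, hn⟩ := h
  rw [MRT.root_fixed] at hn
  exact hn.symm

theorem MRT.iterate_ge {v : T.V} {a : ℕ} (h : T.parent^[a] v = T.root) :
    ∀ b, a ≤ b → T.parent^[b] v = T.root := by
  intro b hb
  have : b = (b - a) + a := by omega
  rw [this, Function.iterate_add_apply, h, MRT.root_fixed]

theorem MRT.cycle_root {v : T.V} {k : ℕ} (hk : 0 < k) (h : T.parent^[k] v = v) :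
    v = T.root := by
  have hcyc : ∀ q : ℕ, T.parent^[k * q] v = v := by
    intro q
    induction q with
    | zero => simp
    | succ q ih => rw [Nat.mul_succ, Function.iterate_add_apply, h, ih]
  obtain ⟨N, hN⟩ := T.reaches_root v
  have hge : T.parent^[k * N] v = T.root := MRT.iterate_ge T hN _ (Nat.le_mul_of_pos_left N hk)
  rw [hcyc N] at hge
  exact hge

theorem MRT.le_antisymm {v w : T.V} (h1 : T.le v w) (h2 : T.le w v) : v = w := by
  obtain ⟨n, hn⟩ := h1
  obtain ⟨m, hm⟩ := h2
  rcases Nat.eq_zero_or_pos (n + m) with h | h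
  · have : n = 0 := by omega
    rw [this] at hn
    exact hn.symm
  · have hcyc : T.parent^[n + m] v = v := by
      rw [Function.iterate_add_apply, hm, hn]
    have hv : v = T.root := MRT.cycle_root T h hcyc
    subst hv
    exact (MRT.le_root T ⟨m, hm⟩).symm ▸ (MRT.le_root T ⟨m, hm⟩) ▸ rfl

theorem MRT.parent_eq_self {v : T.V} (h : T.parent v = v) : v = T.root := by
  exact MRT.cycle_root T (k := 1) one_pos (by simpa using h)

theorem MRT.le_of_parent {v w : T.V} (h : T.parent w = v) : T.le v w := ⟨1, by simpa using h⟩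

theorem MRT.le_of_le_parent {u v : T.V} (h : T.le u (T.parent v)) : T.le u v := by
  obtain ⟨n, hn⟩ := h
  exact ⟨n + 1, by rw [Function.iterate_add_apply]; simpa using hn⟩

/-- If `v < w` then there is a child `u` of `v` with `u ≤ w`. -/
theorem MRT.exists_child (T : MetricRootedTree) :
    ∀ (n : ℕ) (w v : T.V), T.parent^[n] w = v → w ≠ v →
      ∃ u, T.parent u = v ∧ u ≠ v ∧ T.le u w := by
  intro n
  induction n with
  | zero => intro w v h hne; exact absurd h hne
  | succ n ih =>
    intro w v h hne
    rw [Function.iterate_succ_apply'] at h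
    by_cases hc : T.parent^[n] w = v
    · exact ih w v hc hne
    · exact ⟨T.parent^[n] w, h, hc, ⟨n, rfl⟩⟩

/-- Two ancestors of one point are comparable. -/
theorem MRT.comparable {u w a : T.V} (h1 : T.le u a) (h2 : T.le w a) :
    T.le u w ∨ T.le w u := by
  obtain ⟨n, hn⟩ := h1
  obtain ⟨m, hm⟩ := h2
  rcases le_total n m with h | h
  · right
    refine ⟨m - n, ?_⟩
    rw [← hn, ← Function.iterate_add_apply]
    rw [show m - n + n = m from by omega, hm]
  · left
    refine ⟨n - m, ?_⟩
    rw [← hm, ← Function.iterate_add_apply]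
    rw [show n - m + m = n from by omega, hn]

theorem MRT.leaf_le {v a : T.V} (hv : T.IsLeaf v) (h : T.le v a) : a = v := by
  by_contra hne
  obtain ⟨n, hn⟩ := h
  obtain ⟨u, hu, hune, _⟩ := MRT.exists_child T n a v hn hne
  exact hune (hv.2 u hu)

open Classical in
theorem MRT.children_partition {A : Finset T.V} (v : T.V)
    (hleaf : ∀ a ∈ A, a ≠ v) :
    (A.filter (fun a => T.le v a)).card
      = ∑ w ∈ T.children v, (A.filter (fun a => T.le w a)).card := by
  classical
  rw [← Finset.card_biUnion]
  · congr 1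
    apply Finset.ext
    intro a
    simp only [Finset.mem_biUnion, Finset.mem_filter, MetricRootedTree.children,
      Finset.mem_univ, true_and]
    constructor
    · rintro ⟨ha, hle⟩
      obtain ⟨n, hn⟩ := hle
      obtain ⟨u, hu, hune, hle'⟩ := MRT.exists_child T n a v hn (hleaf a ha)
      exact ⟨u, ⟨hu, hune⟩, ha, hle'⟩
    · rintro ⟨u, ⟨hu, _⟩, ha, hle⟩
      exact ⟨ha, MRT.le_trans T (MRT.le_of_parent T hu) hle⟩
  · intro w1 h1 w2 h2 hne
    simp only [Finset.mem_coe, MetricRootedTree.children, Finset.mem_filter, Finset.mem_univ, true_and] at h1 h2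
    apply Finset.disjoint_left.mpr
    intro a ha1 ha2
    rw [Finset.mem_filter] at ha1 ha2
    rcases MRT.comparable T ha1.2 ha2.2 with h | h
    · obtain ⟨k, hk⟩ := h
      rcases Nat.eq_zero_or_pos k with rfl | hkpos
      · exact hne hk.symm
      · have : T.le w1 v := by
          refine ⟨k - 1, ?_⟩
          rw [← h2.1, ← Function.iterate_succ_apply,
            show (k - 1).succ = k from by omega, hk]
        exact h1.2 (MRT.le_antisymm T this (MRT.le_of_parent T h1.1))
    · obtain ⟨k, hk⟩ := h
      rcases Nat.eq_zero_or_pos k with rfl | hkpos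
      · exact hne hk
      · have : T.le w2 v := by
          refine ⟨k - 1, ?_⟩
          rw [← h1.1, ← Function.iterate_succ_apply,
            show (k - 1).succ = k from by omega, hk]
        exact h2.2 (MRT.le_antisymm T this (MRT.le_of_parent T h2.1))

end MyTreeLemmas
section MyHurwitzLemmas

open Finset

variable {G : Type} [Group G] [Fintype G]

theorem innerCF_sum {ι : Type*} (s : Finset ι) (χ : G → ℂ) (F : ι → G → ℂ) :
    innerCF χ (fun g => ∑ w ∈ s, F w g) = ∑ w ∈ s, innerCF χ (F w) := by
  unfold innerCF
  rw [← Finset.mul_sum]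
  congr 1
  rw [Finset.sum_comm]
  apply Finset.sum_congr rfl
  intro g _
  rw [Finset.mul_sum]

theorem innerCF_comb (χ f h k : G → ℂ) (c : ℂ) :
    innerCF χ (fun g => f g + c * (h g - k g))
      = innerCF χ f + c * (innerCF χ h - innerCF χ k) := by
  unfold innerCF
  have key : ∑ g : G, (starRingEnd ℂ) (χ g) * (f g + c * (h g - k g))
      = (∑ g : G, (starRingEnd ℂ) (χ g) * f g)
        + c * ((∑ g : G, (starRingEnd ℂ) (χ g) * h g)
          - (∑ g : G, (starRingEnd ℂ) (χ g) * k g)) := by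
    rw [← Finset.sum_sub_distrib, Finset.mul_sum, ← Finset.sum_add_distrib]
    apply Finset.sum_congr rfl
    intro g _
    ring
  rw [key]
  ring

variable {p : ℕ}

theorem conj_chain (T : HurwitzTree G p) :
    ∀ (n : ℕ) (b v : T.V), T.parent^[n] b = v →
      ∃ g : G, ∀ x ∈ T.Gv b, g * x * g⁻¹ ∈ T.Gv v := by
  intro n
  induction n with
  | zero =>
    rintro b v rfl
    exact ⟨1, fun x hx => by simpa using hx⟩
  | succ n ih =>
    intro b v h
    rw [Function.iterate_succ_apply'] at h
    obtain ⟨g1, hg1⟩ := ih b (T.parent^[n] b) rfl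
    by_cases hc : T.parent^[n] b = v
    · exact ⟨g1, fun x hx => hc ▸ hg1 x hx⟩
    · obtain ⟨g2, hg2⟩ := T.h1_sub v (T.parent^[n] b) h hc
      refine ⟨g2 * g1, fun x hx => ?_⟩
      have := hg2 _ (hg1 x hx)
      have heq : g2 * (g1 * x * g1⁻¹) * g2⁻¹ = (g2 * g1) * x * (g2 * g1)⁻¹ := by group
      rwa [heq] at this

open Classical in
theorem artin_inner (T : HurwitzTree G p) (A : Finset T.V)
    (hA : A ⊆ T.toMetricRootedTree.leaves)
    (χ : G → ℂ) (m : ℂ)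
    (hA' : ∀ a ∈ A, innerCF χ (indAug (T.Gv a)) = m)
    (hB' : ∀ a ∈ T.toMetricRootedTree.leaves, a ∉ A → innerCF χ (indAug (T.Gv a)) = 0)
    (N : ℕ) :
    ∀ v : T.V,
      (Finset.univ.filter (fun x => T.toMetricRootedTree.le v x)).card ≤ N →
      v ≠ T.root →
      innerCF χ (T.av v)
        = m * ((A.filter (fun a => T.toMetricRootedTree.le v a)).card : ℂ) := by
  classical
  induction N with
  | zero =>
    intro v hcard _
    exfalso
    have hm : v ∈ Finset.univ.filter (fun x => T.toMetricRootedTree.le v x) := by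
      simp [MRT.le_refl T.toMetricRootedTree v]
    have := Finset.card_pos.mpr ⟨v, hm⟩
    omega
  | succ N ih =>
    intro v hcard hv
    by_cases hleaf : T.toMetricRootedTree.IsLeaf v
    · -- leaf case
      rw [T.h3_leaf v hleaf]
      have hmemB : v ∈ T.toMetricRootedTree.leaves := by
        simp [MetricRootedTree.leaves, hleaf]
      by_cases hvA : v ∈ A
      · have hfilter : A.filter (fun a => T.toMetricRootedTree.le v a) = {v} := by
          apply Finset.ext
          intro a
          simp only [Finset.mem_filter, Finset.mem_singleton]
          constructor
          · rintro ⟨ha, hle⟩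
            exact MRT.leaf_le T.toMetricRootedTree hleaf hle
          · rintro rfl
            exact ⟨hvA, MRT.le_refl _ _⟩
        rw [hA' v hvA, hfilter]
        simp
      · have hfilter : A.filter (fun a => T.toMetricRootedTree.le v a) = ∅ := by
          apply Finset.eq_empty_of_forall_notMem
          intro a ha
          rw [Finset.mem_filter] at ha
          exact hvA ((MRT.leaf_le T.toMetricRootedTree hleaf ha.2) ▸ ha.1)
        rw [hB' v hmemB hvA, hfilter]
        simp
    · -- interior case
      rw [T.h3_inner v hv hleaf, innerCF_sum]
      have hchild : ∀ w ∈ T.toMetricRootedTree.children v,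
          innerCF χ (T.av w)
            = m * ((A.filter (fun a => T.toMetricRootedTree.le w a)).card : ℂ) := by
        intro w hw
        simp only [MetricRootedTree.children, Finset.mem_filter, Finset.mem_univ,
          true_and] at hw
        have hwroot : w ≠ T.root := by
          intro hwr
          rw [hwr] at hw
          have hvr : v = T.root := by rw [← hw.1]; exact T.parent_root
          exact hv hvr
        apply ih w _ hwroot
        have hsub : Finset.univ.filter (fun x => T.toMetricRootedTree.le w x)
            ⊆ (Finset.univ.filter (fun x => T.toMetricRootedTree.le v x)).erase v := by
          intro x hx
          rw [Finset.mem_filter] at hx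
          rw [Finset.mem_erase, Finset.mem_filter]
          constructor
          · intro hxv
            subst hxv
            exact hw.2 (MRT.le_antisymm T.toMetricRootedTree hx.2
              (MRT.le_of_parent T.toMetricRootedTree hw.1))
          · exact ⟨Finset.mem_univ x, MRT.le_trans T.toMetricRootedTree
              (MRT.le_of_parent T.toMetricRootedTree hw.1) hx.2⟩
        have h1 := Finset.card_le_card hsub
        have h2 : ((Finset.univ.filter (fun x => T.toMetricRootedTree.le v x)).erase v).card
            = (Finset.univ.filter (fun x => T.toMetricRootedTree.le v x)).card - 1 := by
          apply Finset.card_erase_of_mem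
          simp [MRT.le_refl T.toMetricRootedTree v]
        have h3 : 0 < (Finset.univ.filter (fun x => T.toMetricRootedTree.le v x)).card :=
          Finset.card_pos.mpr ⟨v, by simp [MRT.le_refl T.toMetricRootedTree v]⟩
        omega
      rw [Finset.sum_congr rfl hchild]
      rw [← Finset.mul_sum, ← Nat.cast_sum]
      congr 2
      have hne : ∀ a ∈ A, a ≠ v := by
        intro a ha hav
        exact hleaf (by simpa [MetricRootedTree.leaves] using hA (hav ▸ ha))
      exact_mod_cast (MRT.children_partition T.toMetricRootedTree v hne).symm

open Classical in
theorem depth_telescope (T : HurwitzTree G p) (χ : G → ℂ) :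
    ∀ (n : ℕ) (v : T.V), T.parent^[n] v = T.root →
      innerCF χ (T.dv v) = innerCF χ (T.dv T.root) +
        ∑ w ∈ Finset.univ.filter
            (fun w => T.toMetricRootedTree.le w v ∧ w ≠ T.root),
          (T.eps w : ℂ) * (innerCF χ (T.av w) - innerCF χ (indAug (T.Gv w))) := by
  classical
  intro n
  induction n with
  | zero =>
    rintro v rfl
    have hempty : Finset.univ.filter (fun w => T.toMetricRootedTree.le w T.root ∧ w ≠ T.root) = ∅ := by
      apply Finset.eq_empty_of_forall_notMem
      intro w hw
      rw [Finset.mem_filter] at hw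
      exact hw.2.2 (MRT.le_root T.toMetricRootedTree hw.2.1)
    rw [hempty]
    simp
  | succ n ih =>
    intro v h
    by_cases hv : v = T.root
    · subst hv
      have hempty : Finset.univ.filter (fun w => T.toMetricRootedTree.le w T.root ∧ w ≠ T.root) = ∅ := by
        apply Finset.eq_empty_of_forall_notMem
        intro w hw
        rw [Finset.mem_filter] at hw
        exact hw.2.2 (MRT.le_root T.toMetricRootedTree hw.2.1)
      rw [hempty]
      simp
    · rw [Function.iterate_succ_apply] at h
      have hstep : innerCF χ (T.dv v) = innerCF χ (T.dv (T.parent v)) +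
          (T.eps v : ℂ) * (innerCF χ (T.av v) - innerCF χ (indAug (T.Gv v))) := by
        rw [T.h4 v hv]
        exact innerCF_comb χ (T.dv (T.parent v)) (T.av v) (indAug (T.Gv v)) (T.eps v : ℂ)
      rw [hstep, ih (T.parent v) h]
      have hset : Finset.univ.filter (fun w => T.toMetricRootedTree.le w v ∧ w ≠ T.root)
          = insert v (Finset.univ.filter (fun w => T.toMetricRootedTree.le w (T.parent v) ∧ w ≠ T.root)) := by
        apply Finset.ext
        intro w
        simp only [Finset.mem_filter, Finset.mem_insert, Finset.mem_univ, true_and]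
        constructor
        · rintro ⟨⟨k, hk⟩, hwroot⟩
          rcases Nat.eq_zero_or_pos k with rfl | hkpos
          · exact Or.inl hk.symm
          · right
            refine ⟨⟨k - 1, ?_⟩, hwroot⟩
            rw [← Function.iterate_succ_apply, show (k - 1).succ = k from by omega, hk]
        · rintro (rfl | ⟨hle, hwroot⟩)
          · exact ⟨MRT.le_refl T.toMetricRootedTree w, hv⟩
          · exact ⟨MRT.le_of_le_parent T.toMetricRootedTree hle, hwroot⟩
      have hnotmem : v ∉ Finset.univ.filter (fun w => T.toMetricRootedTree.le w (T.parent v) ∧ w ≠ T.root) := by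
        rw [Finset.mem_filter]
        rintro ⟨-, hle, -⟩
        have : T.parent v = v :=
          MRT.le_antisymm T.toMetricRootedTree (MRT.le_of_parent T.toMetricRootedTree rfl) hle
        exact hv (MRT.parent_eq_self T.toMetricRootedTree this)
      rw [hset, Finset.sum_insert hnotmem]
      ring

end MyHurwitzLemmas
open Classical in
/-- Density lemma for Hurwitz trees: let `T` be a Hurwitz tree of type `(G,p)`, `A ⊆ B`
a set of leaves, `b ∈ A`, and `χ` a character of `G` with `⟨χ, (u_{G_a})^*⟩ = m` for
`a ∈ A` and `= 0` for `a ∈ B∖A`, where `m = ⟨χ, u_G⟩`.  Then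
`m·d(A,b) = δ_b(χ) - δ_{v₀}(χ)`. -/
theorem stmt12 (G : Type) [Group G] [Fintype G] (p : ℕ) (hp : p.Prime)
    (T : HurwitzTree G p) (A : Finset T.V) (hA : A ⊆ T.toMetricRootedTree.leaves)
    (b : T.V) (hb : b ∈ A)
    (χ : G → ℂ) (hχ : ∃ V : FDRep ℂ G, ∀ g : G, χ g = V.character g)
    (m : ℂ) (hm : innerCF χ (augChar (⊤ : Subgroup G)) = m)
    (hA' : ∀ a ∈ A, innerCF χ (indAug (T.Gv a)) = m)
    (hB' : ∀ a ∈ T.toMetricRootedTree.leaves, a ∉ A → innerCF χ (indAug (T.Gv a)) = 0) :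
    m * (T.toMetricRootedTree.density A b : ℂ) =
      innerCF χ (T.dv b) - innerCF χ (T.dv T.root) := by
  classical
  obtain ⟨V, hχV⟩ := hχ
  have hb_leaf : T.toMetricRootedTree.IsLeaf b := by
    have := hA hb
    simpa [MetricRootedTree.leaves] using this
  -- `⟨χ, (u_{G_w})^*⟩ = m` for every `w ≤ b`
  have htop : (starRingEnd ℂ) (χ 1) - (Fdim V (⊤ : Subgroup G) : ℂ) = m := by
    rw [← innerCF_indAug_eq V χ hχV, indAug_top_eq]
    exact hm
  have hbm : (starRingEnd ℂ) (χ 1) - (Fdim V (T.Gv b) : ℂ) = m := by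
    rw [← innerCF_indAug_eq V χ hχV]
    exact hA' b hb
  have hFb : Fdim V (T.Gv b) = Fdim V (⊤ : Subgroup G) := by
    have hc := sub_right_injective (htop.trans hbm.symm)
    exact_mod_cast hc.symm
  have hGw : ∀ w : T.V, T.toMetricRootedTree.le w b →
      innerCF χ (indAug (T.Gv w)) = m := by
    rintro w ⟨n, hn⟩
    obtain ⟨g, hg⟩ := conj_chain T n b w hn
    have h1 : Fdim V (⊤ : Subgroup G) ≤ Fdim V (T.Gv w) := Fdim_mono V le_top
    have h2 : Fdim V (T.Gv w) ≤ Fdim V (T.Gv b) := Fdim_conj_le V g hg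
    have heq : Fdim V (T.Gv w) = Fdim V (⊤ : Subgroup G) :=
      le_antisymm (hFb ▸ h2) h1
    rw [innerCF_indAug_eq V χ hχV, heq]
    exact htop
  -- telescoping along the path from the root to `b`
  obtain ⟨n, hn⟩ := T.reaches_root b
  rw [depth_telescope T χ n b hn, add_sub_cancel_left]
  set P : Finset T.V := Finset.univ.filter
    (fun w => T.toMetricRootedTree.le w b ∧ w ≠ T.root) with hP
  -- rewrite each summand of the telescoped sum
  have hsummand : ∀ w ∈ P,
      (T.eps w : ℂ) * (innerCF χ (T.av w) - innerCF χ (indAug (T.Gv w)))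
        = m * ((T.eps w : ℂ) *
            (((A.erase b).filter (fun a => T.toMetricRootedTree.le w a)).card : ℂ)) := by
    intro w hw
    rw [hP, Finset.mem_filter] at hw
    obtain ⟨-, hwb, hwroot⟩ := hw
    have hav := artin_inner T A hA χ m hA' hB'
      ((Finset.univ.filter (fun x => T.toMetricRootedTree.le w x)).card) w le_rfl hwroot
    have hsplit : A.filter (fun a => T.toMetricRootedTree.le w a)
        = insert b ((A.erase b).filter (fun a => T.toMetricRootedTree.le w a)) := by
      apply Finset.ext
      intro a
      simp only [Finset.mem_filter, Finset.mem_insert, Finset.mem_erase]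
      constructor
      · rintro ⟨haA, hle⟩
        by_cases hab : a = b
        · exact Or.inl hab
        · exact Or.inr ⟨⟨hab, haA⟩, hle⟩
      · rintro (rfl | ⟨⟨-, haA⟩, hle⟩)
        · exact ⟨hb, hwb⟩
        · exact ⟨haA, hle⟩
    have hbnot : b ∉ (A.erase b).filter (fun a => T.toMetricRootedTree.le w a) := by
      simp
    have hcard : ((A.filter (fun a => T.toMetricRootedTree.le w a)).card : ℂ)
        = (((A.erase b).filter (fun a => T.toMetricRootedTree.le w a)).card : ℂ) + 1 := by
      rw [hsplit, Finset.card_insert_of_notMem hbnot]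
      push_cast
      ring
    rw [hav, hGw w hwb, hcard]
    ring
  rw [Finset.sum_congr rfl hsummand]
  -- rewrite the density as a double sum and swap the order of summation
  have hden : (T.toMetricRootedTree.density A b : ℂ)
      = ∑ b' ∈ A.erase b, ∑ v ∈ Finset.univ.filter
          (fun v => T.toMetricRootedTree.le v b ∧ T.toMetricRootedTree.le v b'
            ∧ v ≠ T.root), (T.eps v : ℂ) := by
    unfold MetricRootedTree.density MetricRootedTree.idist
    push_cast
    rfl
  have hinner : ∀ b' : T.V, Finset.univ.filter
        (fun v => T.toMetricRootedTree.le v b ∧ T.toMetricRootedTree.le v b'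
          ∧ v ≠ T.root)
      = P.filter (fun v => T.toMetricRootedTree.le v b') := by
    intro b'
    rw [hP, Finset.filter_filter]
    apply Finset.filter_congr
    intro x _
    tauto
  rw [hden]
  rw [Finset.sum_congr rfl fun b' _ => by rw [hinner b', Finset.sum_filter]]
  rw [Finset.sum_comm]
  rw [Finset.mul_sum]
  apply Finset.sum_congr rfl
  intro v hv
  rw [← Finset.sum_filter, Finset.sum_const, nsmul_eq_mul]
  ring
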